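/- Let G be a connected graph with a bridge e = u₀u₁, and let G₀, G₁ be the two components of G − e with u_i ∈ G_i. If M₀ is a maximal matching of the subgraph induced by V(G₀) ∪ {u₁} that avoids the edge u₀u₁, and M₁ is a maximal matching of G₁, then M₀ ∪ M₁ is a maximal matching of G. -/

import Mathlib

open SimpleGraph Finset
open scoped Classical

/-- `M` is a matching of `G`: a set of edges of `G` that are pairwise non-adjacent. -/
def IsMatchingSet {V : Type} (G : SimpleGraph V) (M : Finset (Sym2 V)) : Prop :=
  (∀ e ∈ M, e ∈ G.edgeSet) ∧
    ∀ e ∈ M, ∀ f ∈ M, e ≠ f → ∀ v : V, v ∈ e → v ∉ f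

/-- `M` is a maximal matching of `G`: a matching that cannot be extended. -/
def IsMaximalMatching {V : Type} (G : SimpleGraph V) (M : Finset (Sym2 V)) : Prop :=
  IsMatchingSet G M ∧ ∀ e ∈ G.edgeSet, e ∉ M → ¬ IsMatchingSet G (insert e M)

/-- `M` is a matching of the subgraph of `G` induced by the vertex set `S`. -/
def IsMatchingIn {V : Type} (G : SimpleGraph V) (S : Set V) (M : Finset (Sym2 V)) : Prop :=
  (∀ e ∈ M, e ∈ G.edgeSet ∧ ∀ v ∈ e, v ∈ S) ∧
    ∀ e ∈ M, ∀ f ∈ M, e ≠ f → ∀ v : V, v ∈ e → v ∉ f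

/-- `M` is a maximal matching of the subgraph of `G` induced by the vertex set `S`. -/
def IsMaximalMatchingIn {V : Type} (G : SimpleGraph V) (S : Set V)
    (M : Finset (Sym2 V)) : Prop :=
  IsMatchingIn G S M ∧
    ∀ e ∈ G.edgeSet, (∀ v ∈ e, v ∈ S) → e ∉ M → ¬ IsMatchingIn G S (insert e M)

/-- Gluing maximal matchings across a bridge `u₀u₁`: a maximal matching `M₀` of the
subgraph induced by `V(G₀) ∪ {u₁}` avoiding `u₀u₁`, together with a maximal matching
`M₁` of `G₁`, forms a maximal matching of `G`. Here `G₀, G₁` are the components of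
`G - u₀u₁` containing `u₀` and `u₁` respectively. -/
theorem stmt_19 {V : Type} [Fintype V] (G : SimpleGraph V)
    (hconn : G.Connected) (u₀ u₁ : V)
    (hbridge : G.IsBridge s(u₀, u₁))
    (M₀ M₁ : Finset (Sym2 V))
    (hM₀ : IsMaximalMatchingIn G
      ({v | (G.deleteEdges {s(u₀, u₁)}).Reachable u₀ v} ∪ {u₁}) M₀)
    (havoid : s(u₀, u₁) ∉ M₀)
    (hM₁ : IsMaximalMatchingIn G {v | (G.deleteEdges {s(u₀, u₁)}).Reachable u₁ v} M₁) :
    IsMaximalMatching G (M₀ ∪ M₁) := by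
  classical
  set G' := G.deleteEdges {s(u₀, u₁)} with hG'def
  have hnr := isBridge_iff.mp hbridge
  -- disjointness of the two reachability classes
  have hdisj : ∀ v, G'.Reachable u₀ v → G'.Reachable u₁ v → False := fun v h0 h1 =>
    hnr (h0.trans h1.symm)
  -- every vertex is in one class
  have hcover : ∀ v, G'.Reachable u₀ v ∨ G'.Reachable u₁ v := by
    intro v
    obtain ⟨w⟩ := hconn.preconnected u₀ v
    have key : ∀ {x y : V} (_ : G.Walk x y),
        (G'.Reachable u₀ x ∨ G'.Reachable u₁ x) →
        (G'.Reachable u₀ y ∨ G'.Reachable u₁ y) := by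
      intro x y p
      induction p with
      | nil => exact id
      | cons h p ih =>
        rename_i c d w'
        intro hx
        apply ih
        by_cases he : s(c, d) = s(u₀, u₁)
        · rw [Sym2.eq_iff] at he
          rcases he with ⟨rfl, rfl⟩ | ⟨rfl, rfl⟩
          · exact Or.inr (Reachable.refl _)
          · exact Or.inl (Reachable.refl _)
        · have hadj' : G'.Adj c d := by
            rw [hG'def, deleteEdges_adj]
            exact ⟨h, by simpa using he⟩
          rcases hx with hx | hx
          · exact Or.inl (hx.trans hadj'.reachable)
          · exact Or.inr (hx.trans hadj'.reachable)
    exact key w (Or.inl (Reachable.refl _))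
  -- each non-bridge edge lies entirely in one class
  have hedge : ∀ a b : V, G.Adj a b → s(a, b) ≠ s(u₀, u₁) →
      (G'.Reachable u₀ a ∧ G'.Reachable u₀ b) ∨
      (G'.Reachable u₁ a ∧ G'.Reachable u₁ b) := by
    intro a b hab hne
    have hadj' : G'.Adj a b := by
      rw [hG'def, deleteEdges_adj]; exact ⟨hab, by simpa using hne⟩
    rcases hcover a with h | h
    · exact Or.inl ⟨h, h.trans hadj'.reachable⟩
    · exact Or.inr ⟨h, h.trans hadj'.reachable⟩
  -- vertices of M₀ edges are all in reach u₀
  have hM₀vert : ∀ e ∈ M₀, ∀ v ∈ e, G'.Reachable u₀ v := by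
    intro e he
    have hG : e ∈ G.edgeSet := (hM₀.1.1 e he).1
    have hS : ∀ v ∈ e, G'.Reachable u₀ v ∨ v = u₁ := by
      intro v hv
      have := (hM₀.1.1 e he).2 v hv
      exact Or.symm (by simpa using this)
    have hne : e ≠ s(u₀, u₁) := fun h => havoid (h ▸ he)
    induction e using Sym2.ind with
    | _ a b =>
      have hab : G.Adj a b := hG
      rcases hedge a b hab hne with ⟨h0a, h0b⟩ | ⟨h1a, h1b⟩
      · intro v hv; rcases Sym2.mem_iff.mp hv with rfl | rfl <;> assumption
      · exfalso
        rcases hS a (Sym2.mem_mk_left a b) with h | rfl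
        · exact hdisj a h h1a
        · rcases hS b (Sym2.mem_mk_right a b) with h | rfl
          · exact hdisj b h h1b
          · exact hab.ne rfl
  have hM₁vert : ∀ e ∈ M₁, ∀ v ∈ e, G'.Reachable u₁ v := fun e he v hv =>
    (hM₁.1.1 e he).2 v hv
  -- the union is a matching
  have hunion : IsMatchingSet G (M₀ ∪ M₁) := by
    constructor
    · intro e he
      rcases Finset.mem_union.mp he with he | he
      · exact (hM₀.1.1 e he).1
      · exact (hM₁.1.1 e he).1
    · intro e he f hf hef v hve hvf
      rcases Finset.mem_union.mp he with he | he <;>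
        rcases Finset.mem_union.mp hf with hf | hf
      · exact hM₀.1.2 e he f hf hef v hve hvf
      · exact hdisj v (hM₀vert e he v hve) (hM₁vert f hf v hvf)
      · exact hdisj v (hM₀vert f hf v hvf) (hM₁vert e he v hve)
      · exact hM₁.1.2 e he f hf hef v hve hvf
  refine ⟨hunion, ?_⟩
  intro e heG henm hins
  induction e using Sym2.ind with
  | _ a b =>
    have hab : G.Adj a b := heG
    have hsub : ∀ N : Finset (Sym2 V), N ⊆ M₀ ∪ M₁ →
        ∀ g ∈ insert s(a,b) N, ∀ f ∈ insert s(a,b) N, g ≠ f → ∀ v : V, v ∈ g → v ∉ f := by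
      intro N hN g hg f hf hgf v hvg
      have hg' : g ∈ insert s(a,b) (M₀ ∪ M₁) := by
        rcases Finset.mem_insert.mp hg with h | h
        · exact Finset.mem_insert.mpr (Or.inl h)
        · exact Finset.mem_insert.mpr (Or.inr (hN h))
      have hf' : f ∈ insert s(a,b) (M₀ ∪ M₁) := by
        rcases Finset.mem_insert.mp hf with h | h
        · exact Finset.mem_insert.mpr (Or.inl h)
        · exact Finset.mem_insert.mpr (Or.inr (hN h))
      exact hins.2 g hg' f hf' hgf v hvg
    have hGmem : ∀ N : Finset (Sym2 V), N ⊆ M₀ ∪ M₁ →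
        ∀ g ∈ insert s(a,b) N, g ∈ G.edgeSet := by
      intro N hN g hg
      rcases Finset.mem_insert.mp hg with rfl | h
      · exact heG
      · exact hunion.1 g (hN h)
    by_cases hbr : s(a, b) = s(u₀, u₁)
    · -- e is the bridge; extends M₀ in S₀
      have henm₀ : s(a,b) ∉ M₀ := fun h => henm (Finset.mem_union_left _ h)
      have hvS : ∀ v ∈ s(a,b), v ∈ ({v | G'.Reachable u₀ v} ∪ {u₁} : Set V) := by
        rw [hbr]
        intro v hv
        rcases Sym2.mem_iff.mp hv with rfl | rfl
        · exact Or.inl (Reachable.refl _)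
        · exact Or.inr rfl
      refine hM₀.2 s(a,b) heG hvS henm₀ ?_
      refine ⟨?_, hsub M₀ Finset.subset_union_left⟩
      intro g hg
      refine ⟨hGmem M₀ Finset.subset_union_left g hg, ?_⟩
      rcases Finset.mem_insert.mp hg with rfl | h
      · exact hvS
      · exact (hM₀.1.1 g h).2
    · rcases hedge a b hab hbr with ⟨h0a, h0b⟩ | ⟨h1a, h1b⟩
      · -- extends M₀
        have henm₀ : s(a,b) ∉ M₀ := fun h => henm (Finset.mem_union_left _ h)
        have hvS : ∀ v ∈ s(a,b), v ∈ ({v | G'.Reachable u₀ v} ∪ {u₁} : Set V) := by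
          intro v hv
          rcases Sym2.mem_iff.mp hv with rfl | rfl
          · exact Or.inl h0a
          · exact Or.inl h0b
        refine hM₀.2 s(a,b) heG hvS henm₀ ?_
        refine ⟨?_, hsub M₀ Finset.subset_union_left⟩
        intro g hg
        refine ⟨hGmem M₀ Finset.subset_union_left g hg, ?_⟩
        rcases Finset.mem_insert.mp hg with rfl | h
        · exact hvS
        · exact (hM₀.1.1 g h).2
      · -- extends M₁
        have henm₁ : s(a,b) ∉ M₁ := fun h => henm (Finset.mem_union_right _ h)
        have hvS : ∀ v ∈ s(a,b), v ∈ ({v | G'.Reachable u₁ v} : Set V) := by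
          intro v hv
          rcases Sym2.mem_iff.mp hv with rfl | rfl
          · exact h1a
          · exact h1b
        refine hM₁.2 s(a,b) heG hvS henm₁ ?_
        refine ⟨?_, hsub M₁ Finset.subset_union_right⟩
        intro g hg
        refine ⟨hGmem M₁ Finset.subset_union_right g hg, ?_⟩
        rcases Finset.mem_insert.mp hg with rfl | h
        · exact hvS
        · exact (hM₁.1.1 g h).2
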